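/- For real t → 0⁺, the sum Σ_{n≥2} (log log n) e^{-nt} is asymptotically equivalent to (log log(1/t))/t. -/

import Mathlib

open Filter Asymptotics

namespace LoglogAux

local notation "l" => nhdsWithin (0:ℝ) (Set.Ioi 0)

lemma exp_shift (t : ℝ) (k : ℕ) (n : ℕ) :
    Real.exp (-((n : ℝ) + k) * t) = Real.exp (-t) ^ n * Real.exp (-((k:ℝ) * t)) := by
  rw [← Real.exp_nat_mul, ← Real.exp_add]; ring_nf

lemma summable_exp_shift {t : ℝ} (ht : 0 < t) (k : ℕ) :
    Summable (fun n : ℕ => Real.exp (-((n : ℝ) + k) * t)) := by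
  have h0 : (0:ℝ) ≤ Real.exp (-t) := (Real.exp_pos _).le
  have h1 : Real.exp (-t) < 1 := Real.exp_lt_one_iff.2 (by linarith)
  refine Summable.congr ((summable_geometric_of_lt_one h0 h1).mul_right
    (Real.exp (-((k:ℝ) * t)))) ?_
  intro n; rw [exp_shift]

lemma tsum_exp_shift {t : ℝ} (ht : 0 < t) (k : ℕ) :
    ∑' n : ℕ, Real.exp (-((n : ℝ) + k) * t)
      = Real.exp (-((k:ℝ) * t)) * (1 - Real.exp (-t))⁻¹ := by
  have h0 : (0:ℝ) ≤ Real.exp (-t) := (Real.exp_pos _).le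
  have h1 : Real.exp (-t) < 1 := Real.exp_lt_one_iff.2 (by linarith)
  calc ∑' n : ℕ, Real.exp (-((n : ℝ) + k) * t)
      = ∑' n : ℕ, Real.exp (-t) ^ n * Real.exp (-((k:ℝ) * t)) := by
        exact tsum_congr fun n => exp_shift t k n
    _ = (1 - Real.exp (-t))⁻¹ * Real.exp (-((k:ℝ) * t)) := by
        rw [tsum_mul_right, tsum_geometric_of_lt_one h0 h1]
    _ = _ := mul_comm _ _

lemma loglog_ge (n : ℕ) : -1 ≤ Real.log (Real.log (n + 2)) := by
  have h2 : (2:ℝ) ≤ (n:ℝ) + 2 := by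
    have : (0:ℝ) ≤ (n:ℝ) := Nat.cast_nonneg n
    linarith
  have hl2 : Real.log 2 ≤ Real.log ((n:ℝ) + 2) := Real.log_le_log (by norm_num) h2
  have hhalf : (1:ℝ)/2 ≤ Real.log 2 := by
    have := Real.log_two_gt_d9; linarith
  have : Real.log (1/2) ≤ Real.log (Real.log ((n:ℝ)+2)) :=
    Real.log_le_log (by norm_num) (by linarith)
  have hlog2le1 : Real.log 2 ≤ 1 := by
    have := Real.log_le_sub_one_of_pos (by norm_num : (0:ℝ) < 2); linarith
  rw [Real.log_div one_ne_zero two_ne_zero, Real.log_one] at this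
  linarith

lemma loglog_le (n : ℕ) : Real.log (Real.log (n + 2)) ≤ (n:ℝ) + 2 := by
  have h2 : (0:ℝ) ≤ (n:ℝ) + 2 := by positivity
  have h1 : Real.log ((n:ℝ)+2) ≤ (n:ℝ)+2 := Real.log_le_self h2
  have h0 : (0:ℝ) ≤ Real.log ((n:ℝ)+2) := Real.log_nonneg (by
    have : (0:ℝ) ≤ (n:ℝ) := Nat.cast_nonneg n
    linarith)
  exact (Real.log_le_self h0).trans h1

lemma abs_loglog_le (n : ℕ) : |Real.log (Real.log (n + 2))| ≤ (n:ℝ) + 2 := by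
  rw [abs_le]
  constructor
  · have h := loglog_ge n
    have h0 : (0:ℝ) ≤ (n:ℝ) := Nat.cast_nonneg n
    linarith
  · exact loglog_le n

lemma summable_linear_exp {t : ℝ} (ht : 0 < t) (k : ℕ) :
    Summable (fun n : ℕ => ((n:ℝ) + k) * Real.exp (-((n : ℝ) + k) * t)) := by
  have h0 : (0:ℝ) ≤ Real.exp (-t) := (Real.exp_pos _).le
  have h1 : Real.exp (-t) < 1 := Real.exp_lt_one_iff.2 (by linarith)
  have h1' : ‖Real.exp (-t)‖ < 1 := by rwa [Real.norm_eq_abs, abs_of_nonneg h0]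
  have hs : Summable (fun n : ℕ => ((n:ℝ)) * Real.exp (-t) ^ n) := by
    have := summable_pow_mul_geometric_of_norm_lt_one 1 h1' (R := ℝ)
    simpa using this
  have hg : Summable (fun n : ℕ => Real.exp (-t) ^ n) := summable_geometric_of_lt_one h0 h1
  have := (hs.add (hg.mul_left (k:ℝ))).mul_right (Real.exp (-((k:ℝ)*t)))
  refine this.congr fun n => ?_
  rw [show -((n:ℝ)+k)*t = (n:ℝ)*(-t) + -((k:ℝ)*t) by ring, Real.exp_add, Real.exp_nat_mul]
  ring

lemma summable_main {t : ℝ} (ht : 0 < t) :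
    Summable (fun n : ℕ => Real.log (Real.log (n + 2)) * Real.exp (-((n : ℝ) + 2) * t)) := by
  refine Summable.of_norm_bounded (summable_linear_exp ht 2) fun n => ?_
  rw [Real.norm_eq_abs, abs_mul, abs_of_nonneg (Real.exp_pos _).le]
  push_cast
  exact mul_le_mul_of_nonneg_right (by have := abs_loglog_le n; push_cast at this ⊢; linarith)
    (Real.exp_pos _).le

lemma three_le_log_hyp {t : ℝ} (ht : 0 < t) (ht4 : t < Real.exp (-4)) :
    4 < Real.log (1/t) := by
  have : Real.log t < -4 := by
    calc Real.log t < Real.log (Real.exp (-4)) := Real.log_lt_log ht ht4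
      _ = -4 := Real.log_exp _
  rw [one_div, Real.log_inv]; linarith

lemma one_le_L {t : ℝ} (ht : 0 < t) (ht4 : t < Real.exp (-4)) :
    1 ≤ Real.log (Real.log (1/t)) := by
  have hu := three_le_log_hyp ht ht4
  have h4 : (1:ℝ) ≤ Real.log 4 := by
    rw [Real.le_log_iff_exp_le (by norm_num)]
    have := Real.exp_one_lt_d9; linarith
  calc (1:ℝ) ≤ Real.log 4 := h4
    _ ≤ Real.log (Real.log (1/t)) := Real.log_le_log (by norm_num) (by linarith)

lemma exp4_lt_one : Real.exp (-4) < 1 := Real.exp_lt_one_iff.2 (by norm_num)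

lemma lower_bound {t : ℝ} (ht : 0 < t) (ht4 : t < Real.exp (-4)) :
    (Real.log (Real.log (1/t)) - Real.log 2) * Real.exp (-(Real.sqrt t + 4*t)) * t⁻¹ - 1
      ≤ ∑' n : ℕ, Real.log (Real.log (n + 2)) * Real.exp (-((n : ℝ) + 2) * t) := by
  set a : ℕ → ℝ := fun n => Real.log (Real.log ((n:ℝ) + 2)) * Real.exp (-((n : ℝ) + 2) * t)
    with ha
  have hs : Summable a := summable_main ht
  have hu : 4 < Real.log (1/t) := three_le_log_hyp ht ht4
  set u : ℝ := Real.log (1/t) with hudef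
  set c : ℝ := Real.log u - Real.log 2 with hc
  have hc' : c = Real.log (u/2) := (Real.log_div (by linarith) two_ne_zero).symm
  have hcpos : 0 < c := by
    rw [hc']
    exact Real.log_pos (by linarith)
  have hsplit1 : ∑' n, a n = a 0 + ∑' n, a (n + 1) := by
    rw [← Summable.sum_add_tsum_nat_add 1 hs, Finset.sum_range_one]
  have ha0 : -1 ≤ a 0 := by
    have h1 : Real.log (Real.log ((0:ℕ) + 2 : ℝ)) ≤ 0 := by
      norm_num
      have h2 : Real.log 2 ≤ 1 := by
        have := Real.log_le_sub_one_of_pos (by norm_num : (0:ℝ) < 2); linarith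
      calc Real.log (Real.log 2) ≤ Real.log 2 - 1 :=
        Real.log_le_sub_one_of_pos (by have := Real.log_two_gt_d9; linarith)
        _ ≤ 0 := by linarith
    have h2 : -1 ≤ Real.log (Real.log ((0:ℕ) + 2 : ℝ)) := by
      norm_num
      have hl2 : (1:ℝ)/2 ≤ Real.log 2 := by have := Real.log_two_gt_d9; linarith
      have : Real.log (1/2) ≤ Real.log (Real.log 2) :=
        Real.log_le_log (by norm_num) hl2
      rw [Real.log_div one_ne_zero two_ne_zero, Real.log_one] at this
      have h2' : Real.log 2 ≤ 1 := by
        have := Real.log_le_sub_one_of_pos (by norm_num : (0:ℝ) < 2); linarith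
      linarith
    have he : Real.exp (-((0:ℝ) + 2) * t) ≤ 1 := by
      rw [Real.exp_le_one_iff]; nlinarith
    have hepos : 0 < Real.exp (-((0:ℝ) + 2) * t) := Real.exp_pos _
    show -1 ≤ Real.log (Real.log ((0:ℕ) + 2 : ℝ)) * Real.exp (-(((0:ℕ):ℝ) + 2) * t)
    push_cast
    norm_num at h1 h2 ⊢
    have key : 0 ≤ (-Real.log (Real.log 2)) * (1 - Real.exp (-(2*t))) := by
      refine mul_nonneg (by linarith) ?_
      rw [sub_nonneg, Real.exp_le_one_iff]
      linarith
    nlinarith [key]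
  set K : ℕ := ⌈1 / Real.sqrt t⌉₊ with hK
  have hsqrtpos : 0 < Real.sqrt t := Real.sqrt_pos.2 ht
  have hK1 : 1 / Real.sqrt t ≤ (K:ℝ) := Nat.le_ceil _
  have hK2 : (K:ℝ) < 1 / Real.sqrt t + 1 := Nat.ceil_lt_add_one (by positivity)
  have hs1 : Summable (fun n => a (n + 1)) := (summable_nat_add_iff 1).2 hs
  have hsplit2 : ∑' n, a (n + 1) = (∑ i ∈ Finset.range K, a (i + 1)) + ∑' n, a (n + K + 1) := by
    rw [← Summable.sum_add_tsum_nat_add K hs1]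
  have hmid : 0 ≤ ∑ i ∈ Finset.range K, a (i + 1) := by
    refine Finset.sum_nonneg fun i _ => ?_
    have h3 : (3:ℝ) ≤ ((i:ℝ) + 1) + 2 := by
      have : (0:ℝ) ≤ (i:ℝ) := Nat.cast_nonneg i
      linarith
    have hlog3 : 1 ≤ Real.log 3 := by
      rw [Real.le_log_iff_exp_le (by norm_num)]
      have := Real.exp_one_lt_d9; linarith
    have : 1 ≤ Real.log (((i:ℝ) + 1) + 2) :=
      hlog3.trans (Real.log_le_log (by norm_num) h3)
    have hll : 0 ≤ Real.log (Real.log (((i:ℝ) + 1) + 2)) := Real.log_nonneg this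
    have : a (i+1) = Real.log (Real.log (((i:ℝ) + 1) + 2)) *
        Real.exp (-(((i:ℝ) + 1) + 2) * t) := by
      rw [ha]; push_cast; ring_nf
    rw [this]
    positivity
  have htail : c * Real.exp (-(((K+3:ℕ):ℝ)) * t) * (1 - Real.exp (-t))⁻¹
      ≤ ∑' n, a (n + K + 1) := by
    have hterm : ∀ n : ℕ, c * Real.exp (-((n:ℝ) + (K+3:ℕ)) * t) ≤ a (n + K + 1) := by
      intro n
      have hcast : a (n + K + 1) = Real.log (Real.log ((n:ℝ) + (K:ℝ) + 3)) *
          Real.exp (-((n:ℝ) + (K:ℝ) + 3) * t) := by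
        rw [ha]; push_cast; ring_nf
      rw [hcast]
      have hge : 1 / Real.sqrt t ≤ (n:ℝ) + (K:ℝ) + 3 := by
        have : (0:ℝ) ≤ (n:ℝ) := Nat.cast_nonneg n
        linarith
      have hlogsqrt : Real.log (1 / Real.sqrt t) = u / 2 := by
        rw [one_div, Real.log_inv, Real.log_sqrt ht.le, hudef, one_div, Real.log_inv]
        ring
      have hl1 : u / 2 ≤ Real.log ((n:ℝ) + (K:ℝ) + 3) := by
        rw [← hlogsqrt]
        exact Real.log_le_log (by positivity) hge
      have hl2 : c ≤ Real.log (Real.log ((n:ℝ) + (K:ℝ) + 3)) := by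
        rw [hc']
        exact Real.log_le_log (by linarith) hl1
      have : Real.exp (-((n:ℝ) + (K+3:ℕ)) * t) = Real.exp (-((n:ℝ) + (K:ℝ) + 3) * t) := by
        push_cast; ring_nf
      rw [this]
      exact mul_le_mul_of_nonneg_right hl2 (Real.exp_pos _).le
    have hsumL : Summable (fun n : ℕ => c * Real.exp (-((n:ℝ) + (K+3:ℕ)) * t)) :=
      (summable_exp_shift ht (K+3)).mul_left c
    have hsumR : Summable (fun n => a (n + K + 1)) := by
      have := (summable_nat_add_iff (K + 1)).2 hs
      exact this.congr fun n => by ring_nf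
    calc c * Real.exp (-(((K+3:ℕ):ℝ)) * t) * (1 - Real.exp (-t))⁻¹
        = ∑' n : ℕ, c * Real.exp (-((n:ℝ) + (K+3:ℕ)) * t) := by
          rw [tsum_mul_left, tsum_exp_shift ht (K+3)]; ring
      _ ≤ ∑' n, a (n + K + 1) := Summable.tsum_le_tsum hterm hsumL hsumR
  have hEt : 1 - Real.exp (-t) ≤ t := by
    have := Real.add_one_le_exp (-t); linarith
  have hEpos : 0 < 1 - Real.exp (-t) := by
    have : Real.exp (-t) < 1 := Real.exp_lt_one_iff.2 (by linarith)
    linarith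
  have hinv : t⁻¹ ≤ (1 - Real.exp (-t))⁻¹ := inv_anti₀ hEpos hEt
  have hexp : Real.exp (-(Real.sqrt t + 4*t)) ≤ Real.exp (-(((K+3:ℕ):ℝ)) * t) := by
    apply Real.exp_le_exp.2
    have hdiv : t / Real.sqrt t = Real.sqrt t := Real.div_sqrt
    have : ((K:ℝ)+3) * t ≤ (1 / Real.sqrt t + 4) * t := by
      apply mul_le_mul_of_nonneg_right _ ht.le
      linarith
    have h2 : (1 / Real.sqrt t + 4) * t = Real.sqrt t + 4 * t := by
      field_simp
      nlinarith [Real.sq_sqrt ht.le, Real.sqrt_nonneg t]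
    push_cast
    nlinarith
  have hchain : c * Real.exp (-(Real.sqrt t + 4*t)) * t⁻¹
      ≤ c * Real.exp (-(((K+3:ℕ):ℝ)) * t) * (1 - Real.exp (-t))⁻¹ := by
    have h1 : c * Real.exp (-(Real.sqrt t + 4*t)) ≤ c * Real.exp (-(((K+3:ℕ):ℝ)) * t) :=
      mul_le_mul_of_nonneg_left hexp hcpos.le
    have h2 : 0 ≤ c * Real.exp (-(Real.sqrt t + 4*t)) := by positivity
    calc c * Real.exp (-(Real.sqrt t + 4*t)) * t⁻¹
        ≤ c * Real.exp (-(Real.sqrt t + 4*t)) * (1 - Real.exp (-t))⁻¹ :=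
          mul_le_mul_of_nonneg_left hinv h2
      _ ≤ c * Real.exp (-(((K+3:ℕ):ℝ)) * t) * (1 - Real.exp (-t))⁻¹ :=
          mul_le_mul_of_nonneg_right h1 (by positivity)
  rw [hsplit1, hsplit2]
  have := hchain.trans htail
  linarith

lemma upper_bound {t : ℝ} (ht : 0 < t) (ht1 : t < 1) :
    ∑' n : ℕ, Real.log (Real.log (n + 2)) * Real.exp (-((n : ℝ) + 2) * t)
      ≤ Real.log (Real.log (3/t^2)) * (Real.exp (-(2*t)) * (1 - Real.exp (-t))⁻¹)
        + 6 * Real.exp (-(1/(2*t))) / t^2 := by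
  set a : ℕ → ℝ := fun n => Real.log (Real.log ((n:ℝ) + 2)) * Real.exp (-((n : ℝ) + 2) * t)
    with ha
  have hs : Summable a := summable_main ht
  have htsq : t^2 ≤ 1 := by nlinarith
  set U : ℝ := Real.log (Real.log (3/t^2)) with hU
  have ht2 : (1:ℝ) ≤ 1/t^2 := by
    rw [le_div_iff₀ (by positivity)]
    nlinarith
  have hU0 : 0 ≤ U := by
    rw [hU]
    refine Real.log_nonneg ?_
    rw [Real.le_log_iff_exp_le (by positivity)]
    have := Real.exp_one_lt_d9
    have h3 : (3:ℝ) ≤ 3/t^2 := by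
      rw [le_div_iff₀ (by positivity)]; nlinarith
    linarith
  set M : ℕ := ⌈1/t^2⌉₊ with hM
  have hM1 : 1/t^2 ≤ (M:ℝ) := Nat.le_ceil _
  have hM2 : (M:ℝ) < 1/t^2 + 1 := Nat.ceil_lt_add_one (by positivity)
  have hsplit : ∑' n, a n = (∑ i ∈ Finset.range M, a i) + ∑' n, a (n + M) :=
    (Summable.sum_add_tsum_nat_add M hs).symm
  have hhead : (∑ i ∈ Finset.range M, a i)
      ≤ U * (Real.exp (-(2*t)) * (1 - Real.exp (-t))⁻¹) := by
    have hterm : ∀ i ∈ Finset.range M, a i ≤ U * Real.exp (-((i:ℝ) + 2) * t) := by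
      intro i hi
      have hle : (i:ℝ) + 2 ≤ 3/t^2 := by
        have h0 : (i:ℝ) + 1 ≤ M := by exact_mod_cast Nat.succ_le_of_lt (Finset.mem_range.1 hi)
        have h1 : (i:ℝ) + 2 ≤ 1/t^2 + 2 := by linarith
        have h2 : 1/t^2 + 2 ≤ 3/t^2 := by
          rw [div_add' _ _ _ (by positivity), div_le_div_iff₀ (by positivity) (by positivity)]
          nlinarith
        linarith
      have hlog1 : Real.log ((i:ℝ)+2) ≤ Real.log (3/t^2) :=
        Real.log_le_log (by positivity) hle
      have hlogpos : 0 < Real.log ((i:ℝ)+2) := by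
        refine Real.log_pos ?_
        have : (0:ℝ) ≤ (i:ℝ) := Nat.cast_nonneg i
        linarith
      exact mul_le_mul_of_nonneg_right (Real.log_le_log hlogpos hlog1) (Real.exp_pos _).le
    calc (∑ i ∈ Finset.range M, a i)
        ≤ ∑ i ∈ Finset.range M, U * Real.exp (-((i:ℝ) + 2) * t) :=
          Finset.sum_le_sum hterm
      _ = U * ∑ i ∈ Finset.range M, Real.exp (-((i:ℝ) + (2:ℕ)) * t) := by
          rw [Finset.mul_sum]; norm_num
      _ ≤ U * ∑' i : ℕ, Real.exp (-((i:ℝ) + (2:ℕ)) * t) := by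
          refine mul_le_mul_of_nonneg_left ?_ hU0
          exact Summable.sum_le_tsum _ (fun i _ => (Real.exp_pos _).le) (summable_exp_shift ht 2)
      _ = U * (Real.exp (-(2*t)) * (1 - Real.exp (-t))⁻¹) := by
          rw [tsum_exp_shift ht 2]
          norm_num
  have htail : ∑' n, a (n + M) ≤ 6 * Real.exp (-(1/(2*t))) / t^2 := by
    have ht2pos : (0:ℝ) < t/2 := by positivity
    have hterm : ∀ n : ℕ, a (n + M) ≤ (2/t) * Real.exp (-((n:ℝ) + ((M+2:ℕ):ℝ)) * (t/2)) := by
      intro n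
      set x : ℝ := (n:ℝ) + (M:ℝ) + 2 with hx
      have hn0 : (0:ℝ) ≤ (n:ℝ) := Nat.cast_nonneg n
      have hM0 : (0:ℝ) ≤ (M:ℝ) := Nat.cast_nonneg M
      have hx0 : (0:ℝ) < x := by rw [hx]; linarith
      have hll : Real.log (Real.log x) ≤ x := by
        have h0 : (0:ℝ) ≤ Real.log x := Real.log_nonneg (by rw [hx]; linarith)
        exact (Real.log_le_self h0).trans (Real.log_le_self hx0.le)
      have hcast : a (n + M) = Real.log (Real.log x) * Real.exp (-x * t) := by
        rw [ha, hx]; push_cast; ring_nf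
      have hxe : x * Real.exp (-(x*(t/2))) ≤ 2/t := by
        have hu : x*(t/2) ≤ Real.exp (x*(t/2)) := by
          have := Real.add_one_le_exp (x*(t/2)); linarith
        rw [Real.exp_neg, ← div_eq_mul_inv, div_le_div_iff₀ (Real.exp_pos _) ht]
        nlinarith
      have hsplitexp : Real.exp (-x * t) = Real.exp (-(x*(t/2))) * Real.exp (-(x*(t/2))) := by
        rw [← Real.exp_add]; ring_nf
      have hexpcast : Real.exp (-((n:ℝ) + ((M+2:ℕ):ℝ)) * (t/2)) = Real.exp (-(x*(t/2))) := by
        congr 1; rw [hx]; push_cast; ring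
      rw [hcast, hsplitexp, hexpcast]
      calc Real.log (Real.log x) * (Real.exp (-(x*(t/2))) * Real.exp (-(x*(t/2))))
          ≤ x * (Real.exp (-(x*(t/2))) * Real.exp (-(x*(t/2)))) :=
            mul_le_mul_of_nonneg_right hll (by positivity)
        _ = (x * Real.exp (-(x*(t/2)))) * Real.exp (-(x*(t/2))) := by ring
        _ ≤ (2/t) * Real.exp (-(x*(t/2))) :=
            mul_le_mul_of_nonneg_right hxe (Real.exp_pos _).le
    have hsumR : Summable (fun n : ℕ => (2/t) * Real.exp (-((n:ℝ) + ((M+2:ℕ):ℝ)) * (t/2))) :=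
      (summable_exp_shift ht2pos (M+2)).mul_left _
    have hsumL : Summable (fun n => a (n + M)) := (summable_nat_add_iff M).2 hs
    have hts : ∑' n, a (n + M)
        ≤ (2/t) * (Real.exp (-(((M+2:ℕ):ℝ) * (t/2))) * (1 - Real.exp (-(t/2)))⁻¹) := by
      calc ∑' n, a (n + M) ≤ ∑' n : ℕ, (2/t) * Real.exp (-((n:ℝ) + ((M+2:ℕ):ℝ)) * (t/2)) :=
            Summable.tsum_le_tsum hterm hsumL hsumR
        _ = (2/t) * (Real.exp (-(((M+2:ℕ):ℝ) * (t/2))) * (1 - Real.exp (-(t/2)))⁻¹) := by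
            rw [tsum_mul_left, tsum_exp_shift ht2pos (M+2)]
    have hexpbd : Real.exp (-(((M+2:ℕ):ℝ) * (t/2))) ≤ Real.exp (-(1/(2*t))) := by
      apply Real.exp_le_exp.2
      have h1 : 1/t^2 * (t/2) ≤ (M:ℝ) * (t/2) :=
        mul_le_mul_of_nonneg_right hM1 ht2pos.le
      have h2 : 1/t^2 * (t/2) = 1/(2*t) := by field_simp
      have h3 : (M:ℝ) * (t/2) ≤ ((M+2:ℕ):ℝ) * (t/2) := by
        apply mul_le_mul_of_nonneg_right _ ht2pos.le
        push_cast; linarith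
      linarith
    have hinvbd : (1 - Real.exp (-(t/2)))⁻¹ ≤ 3/t := by
      have hpos : (0:ℝ) < 1 + t/2 := by linarith
      have h1 : Real.exp (-(t/2)) ≤ (1+t/2)⁻¹ := by
        rw [Real.exp_neg]
        apply inv_anti₀ hpos
        have := Real.add_one_le_exp (t/2); linarith
      have h2 : (1+t/2)⁻¹ ≤ 1 - t/3 := by
        rw [← one_div, div_le_iff₀ hpos]
        nlinarith
      have h3 : t/3 ≤ 1 - Real.exp (-(t/2)) := by linarith
      calc (1 - Real.exp (-(t/2)))⁻¹ ≤ (t/3)⁻¹ := inv_anti₀ (by positivity) h3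
        _ = 3/t := by rw [inv_div]
    have hfinal : (2/t) * (Real.exp (-(((M+2:ℕ):ℝ) * (t/2))) * (1 - Real.exp (-(t/2)))⁻¹)
        ≤ 6 * Real.exp (-(1/(2*t))) / t^2 := by
      have hEpos : 0 < 1 - Real.exp (-(t/2)) := by
        have : Real.exp (-(t/2)) < 1 := Real.exp_lt_one_iff.2 (by linarith)
        linarith
      have step1 : Real.exp (-(((M+2:ℕ):ℝ) * (t/2))) * (1 - Real.exp (-(t/2)))⁻¹
          ≤ Real.exp (-(1/(2*t))) * (3/t) := by
        calc Real.exp (-(((M+2:ℕ):ℝ) * (t/2))) * (1 - Real.exp (-(t/2)))⁻¹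
            ≤ Real.exp (-(1/(2*t))) * (1 - Real.exp (-(t/2)))⁻¹ :=
              mul_le_mul_of_nonneg_right hexpbd (by positivity)
          _ ≤ Real.exp (-(1/(2*t))) * (3/t) :=
              mul_le_mul_of_nonneg_left hinvbd (Real.exp_pos _).le
      calc (2/t) * (Real.exp (-(((M+2:ℕ):ℝ) * (t/2))) * (1 - Real.exp (-(t/2)))⁻¹)
          ≤ (2/t) * (Real.exp (-(1/(2*t))) * (3/t)) :=
            mul_le_mul_of_nonneg_left step1 (by positivity)
        _ = 6 * Real.exp (-(1/(2*t))) / t^2 := by field_simp; ring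
    exact hts.trans hfinal
  rw [hsplit]
  linarith

lemma tendsto_L : Tendsto (fun t : ℝ => Real.log (Real.log (1/t))) l atTop := by
  have h1 : Tendsto (fun t : ℝ => 1/t) l atTop := by
    simpa only [one_div] using tendsto_inv_nhdsGT_zero
  exact Real.tendsto_log_atTop.comp (Real.tendsto_log_atTop.comp h1)

lemma tendsto_Linv : Tendsto (fun t : ℝ => (Real.log (Real.log (1/t)))⁻¹) l (nhds 0) :=
  tendsto_L.inv_tendsto_atTop

lemma tendsto_t_div_one_sub_exp :
    Tendsto (fun t : ℝ => t * (1 - Real.exp (-t))⁻¹) l (nhds 1) := by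
  have h1 : HasDerivAt (fun s : ℝ => -s) (-1) 0 := (hasDerivAt_id 0).neg
  have h2 : HasDerivAt (fun s : ℝ => Real.exp (-s)) (Real.exp (-0) * -1) 0 :=
    (Real.hasDerivAt_exp (-0)).comp 0 h1
  have hder : HasDerivAt (fun s : ℝ => 1 - Real.exp (-s)) 1 0 := by
    have := (hasDerivAt_const (0:ℝ) (1:ℝ)).sub h2
    have e : (0:ℝ) - Real.exp (-0) * -1 = 1 := by simp
    rw [e] at this; exact this
  have hslope := hasDerivAt_iff_tendsto_slope.1 hder
  have hmono : l ≤ nhdsWithin (0:ℝ) {0}ᶜ :=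
    nhdsWithin_mono 0 (fun x hx => ne_of_gt hx)
  have h3 : Tendsto (fun t : ℝ => (1 - Real.exp (-t))/t) l (nhds 1) := by
    refine ((hslope.mono_left hmono)).congr fun t => ?_
    rw [slope_def_field]
    simp [div_eq_mul_inv]
  have h4 := h3.inv₀ one_ne_zero
  simp only [inv_one] at h4
  refine h4.congr fun t => ?_
  rw [inv_div, div_eq_mul_inv]

lemma tendsto_exp_term : Tendsto (fun t : ℝ => 6 * Real.exp (-(1/(2*t))) / t) l (nhds 0) := by
  have hF : Tendsto (fun v : ℝ => v * Real.exp (-v)) atTop (nhds 0) := by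
    simpa using Real.tendsto_pow_mul_exp_neg_atTop_nhds_zero 1
  have hhalf : Tendsto (fun u : ℝ => u/2) atTop atTop := by
    apply Tendsto.atTop_div_const (by norm_num) tendsto_id
  have hG : Tendsto (fun u : ℝ => 12 * ((u/2) * Real.exp (-(u/2)))) atTop (nhds 0) := by
    have := (hF.comp hhalf).const_mul (12:ℝ)
    simpa using this
  have h1 : Tendsto (fun t : ℝ => 1/t) l atTop := by
    simpa only [one_div] using tendsto_inv_nhdsGT_zero
  have := hG.comp h1
  refine this.congr' ?_
  filter_upwards [self_mem_nhdsWithin] with t (ht : 0 < t)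
  show 12 * ((1/t/2) * Real.exp (-(1/t/2))) = 6 * Real.exp (-(1/(2*t))) / t
  have h2 : 1/t/2 = 1/(2*t) := by
    rw [div_div, mul_comm]
  rw [h2]
  field_simp
  ring

lemma tendsto_sqrt_exp : Tendsto (fun t : ℝ => Real.exp (-(Real.sqrt t + 4*t))) l (nhds 1) := by
  have h1 : Tendsto (fun t : ℝ => Real.sqrt t + 4*t) l (nhds 0) := by
    have hs : Tendsto Real.sqrt l (nhds 0) :=
      (Real.continuous_sqrt.tendsto' 0 0 Real.sqrt_zero).mono_left nhdsWithin_le_nhds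
    have ht : Tendsto (fun t : ℝ => 4*t) l (nhds 0) := by
      have hid : Tendsto (fun t : ℝ => t) l (nhds 0) :=
        tendsto_id.mono_right nhdsWithin_le_nhds
      simpa using hid.const_mul (4:ℝ)
    simpa using hs.add ht
  have h1n : Tendsto (fun t : ℝ => -(Real.sqrt t + 4*t)) l (nhds 0) := by
    simpa using h1.neg
  have := (Real.continuous_exp.tendsto' 0 1 Real.exp_zero).comp h1n
  simpa [Function.comp_def] using this

lemma tendsto_lo :
    Tendsto (fun t : ℝ => ((Real.log (Real.log (1/t)) - Real.log 2) *
      Real.exp (-(Real.sqrt t + 4*t)) - t) / Real.log (Real.log (1/t))) l (nhds 1) := by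
  have key : Tendsto (fun t : ℝ => (1 - Real.log 2 * (Real.log (Real.log (1/t)))⁻¹) *
      Real.exp (-(Real.sqrt t + 4*t)) - t * (Real.log (Real.log (1/t)))⁻¹) l (nhds 1) := by
    have h1 : Tendsto (fun t : ℝ => 1 - Real.log 2 * (Real.log (Real.log (1/t)))⁻¹) l
        (nhds 1) := by
      have := (tendsto_Linv.const_mul (Real.log 2)).const_sub 1
      simpa using this
    have h2 : Tendsto (fun t : ℝ => t * (Real.log (Real.log (1/t)))⁻¹) l (nhds 0) := by
      have hid : Tendsto (fun t : ℝ => t) l (nhds 0) :=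
        tendsto_id.mono_right nhdsWithin_le_nhds
      simpa using hid.mul tendsto_Linv
    have := (h1.mul tendsto_sqrt_exp).sub h2
    simpa using this
  refine key.congr' ?_
  have hev : ∀ᶠ t in l, 0 < t ∧ t < Real.exp (-4) := by
    filter_upwards [self_mem_nhdsWithin,
      (eventually_lt_nhds (by positivity : (0:ℝ) < Real.exp (-4))).filter_mono
        nhdsWithin_le_nhds] with t h1 h2
    exact ⟨h1, h2⟩
  filter_upwards [hev] with t ⟨ht, ht4⟩
  have hL : (0:ℝ) < Real.log (Real.log (1/t)) := lt_of_lt_of_le one_pos (one_le_L ht ht4)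
  field_simp

lemma tendsto_hi :
    Tendsto (fun t : ℝ => (Real.log (Real.log (3/t^2)) *
        (Real.exp (-(2*t)) * (1 - Real.exp (-t))⁻¹)
        + 6 * Real.exp (-(1/(2*t))) / t^2) * t / Real.log (Real.log (1/t))) l (nhds 1) := by
  have hev : ∀ᶠ t in l, 0 < t ∧ t < Real.exp (-4) := by
    filter_upwards [self_mem_nhdsWithin,
      (eventually_lt_nhds (by positivity : (0:ℝ) < Real.exp (-4))).filter_mono
        nhdsWithin_le_nhds] with t h1 h2
    exact ⟨h1, h2⟩
  have hUL : Tendsto (fun t : ℝ =>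
      Real.log (Real.log (3/t^2)) / Real.log (Real.log (1/t))) l (nhds 1) := by
    have hup : Tendsto (fun t : ℝ => 1 + Real.log 3 * (Real.log (Real.log (1/t)))⁻¹) l
        (nhds 1) := by
      have := (tendsto_Linv.const_mul (Real.log 3)).const_add 1
      simpa using this
    refine tendsto_of_tendsto_of_tendsto_of_le_of_le' tendsto_const_nhds hup ?_ ?_
    · filter_upwards [hev] with t ⟨ht, ht4⟩
      have hu := three_le_log_hyp ht ht4
      have hL1 := one_le_L ht ht4
      have hL0 : (0:ℝ) < Real.log (Real.log (1/t)) := by linarith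
      rw [le_div_iff₀ hL0, one_mul]
      have hq : 1/t ≤ 3/t^2 := by
        rw [div_le_div_iff₀ ht (by positivity)]
        nlinarith [exp4_lt_one]
      have h1 : Real.log (1/t) ≤ Real.log (3/t^2) := Real.log_le_log (by positivity) hq
      exact Real.log_le_log (by linarith) h1
    · filter_upwards [hev] with t ⟨ht, ht4⟩
      have hu := three_le_log_hyp ht ht4
      have hL1 := one_le_L ht ht4
      have hL0 : (0:ℝ) < Real.log (Real.log (1/t)) := by linarith
      set u : ℝ := Real.log (1/t) with hudef
      have hlog3t : Real.log (3/t^2) = Real.log 3 + 2*u := by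
        rw [Real.log_div (by norm_num) (by positivity), Real.log_pow, hudef, one_div,
          Real.log_inv]
        push_cast; ring
      have hlog3le : Real.log 3 ≤ 2 := by
        have := Real.log_le_sub_one_of_pos (by norm_num : (0:ℝ) < 3); linarith
      have hlog3pos : (0:ℝ) ≤ Real.log 3 := Real.log_nonneg (by norm_num)
      have hUle : Real.log (Real.log (3/t^2)) ≤ Real.log 3 + Real.log u := by
        rw [hlog3t, ← Real.log_mul (by norm_num) (by linarith)]
        exact Real.log_le_log (by linarith) (by nlinarith)
      rw [div_le_iff₀ hL0]
      have : (1 + Real.log 3 * (Real.log u)⁻¹) * Real.log u = Real.log u + Real.log 3 := by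
        field_simp
      rw [this]
      linarith
  have hexp2 : Tendsto (fun t : ℝ => Real.exp (-(2*t))) l (nhds 1) := by
    have h1 : Tendsto (fun t : ℝ => 2*t) l (nhds 0) := by
      have hid : Tendsto (fun t : ℝ => t) l (nhds 0) :=
        tendsto_id.mono_right nhdsWithin_le_nhds
      simpa using hid.const_mul (2:ℝ)
    have h1n : Tendsto (fun t : ℝ => -(2*t)) l (nhds 0) := by simpa using h1.neg
    have := (Real.continuous_exp.tendsto' 0 1 Real.exp_zero).comp h1n
    simpa [Function.comp_def] using this
  have key : Tendsto (fun t : ℝ =>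
      (Real.log (Real.log (3/t^2)) / Real.log (Real.log (1/t))) * Real.exp (-(2*t)) *
        (t * (1 - Real.exp (-t))⁻¹)
      + (6 * Real.exp (-(1/(2*t))) / t) * (Real.log (Real.log (1/t)))⁻¹) l (nhds 1) := by
    have h1 := (hUL.mul hexp2).mul tendsto_t_div_one_sub_exp
    have h2 := tendsto_exp_term.mul tendsto_Linv
    have := h1.add h2
    simpa using this
  refine key.congr' ?_
  filter_upwards [hev] with t ⟨ht, ht4⟩
  have hL0 : (0:ℝ) < Real.log (Real.log (1/t)) := lt_of_lt_of_le one_pos (one_le_L ht ht4)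
  have halg : ∀ (U L X v e2 : ℝ), L ≠ 0 →
      U/L*e2*(t*v) + 6*X/t*L⁻¹ = (U*(e2*v) + 6*X/t^2)*t/L := by
    intro U L X v e2 hL
    field_simp
  exact halg _ _ _ _ _ hL0.ne'

end LoglogAux

open LoglogAux in
/-- As `t → 0⁺`, one has `∑_{n≥2} (log log n) e^{-nt} ~ (log log(1/t))/t`. -/
theorem loglog_exp_sum_asymp :
    (fun t : ℝ => ∑' n : ℕ, Real.log (Real.log (n + 2)) * Real.exp (-((n : ℝ) + 2) * t))
      ~[nhdsWithin 0 (Set.Ioi 0)]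
      fun t : ℝ => Real.log (Real.log (1 / t)) / t := by
  have hev : ∀ᶠ t in nhdsWithin (0:ℝ) (Set.Ioi 0), 0 < t ∧ t < Real.exp (-4) := by
    filter_upwards [self_mem_nhdsWithin,
      (eventually_lt_nhds (by positivity : (0:ℝ) < Real.exp (-4))).filter_mono
        nhdsWithin_le_nhds] with t h1 h2
    exact ⟨h1, h2⟩
  have hz : ∀ᶠ t in nhdsWithin (0:ℝ) (Set.Ioi 0), Real.log (Real.log (1/t)) / t ≠ 0 := by
    filter_upwards [hev] with t ⟨ht, ht4⟩
    have hL := one_le_L ht ht4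
    exact ne_of_gt (div_pos (by linarith) ht)
  rw [Asymptotics.isEquivalent_iff_tendsto_one hz]
  have hr : Tendsto (fun t : ℝ =>
      (∑' n : ℕ, Real.log (Real.log (n + 2)) * Real.exp (-((n : ℝ) + 2) * t)) * t /
        Real.log (Real.log (1/t))) (nhdsWithin (0:ℝ) (Set.Ioi 0)) (nhds 1) := by
    refine tendsto_of_tendsto_of_tendsto_of_le_of_le' tendsto_lo tendsto_hi ?_ ?_
    · filter_upwards [hev] with t ⟨ht, ht4⟩
      have hL0 : (0:ℝ) < Real.log (Real.log (1/t)) :=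
        lt_of_lt_of_le one_pos (one_le_L ht ht4)
      have h := lower_bound ht ht4
      have h2 := mul_le_mul_of_nonneg_right h ht.le
      have h3 : ((Real.log (Real.log (1/t)) - Real.log 2) *
          Real.exp (-(Real.sqrt t + 4*t)) * t⁻¹ - 1) * t
          = (Real.log (Real.log (1/t)) - Real.log 2) * Real.exp (-(Real.sqrt t + 4*t)) - t := by
        field_simp
      rw [h3] at h2
      exact div_le_div_of_nonneg_right h2 hL0.le
    · filter_upwards [hev] with t ⟨ht, ht4⟩
      have hL0 : (0:ℝ) < Real.log (Real.log (1/t)) :=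
        lt_of_lt_of_le one_pos (one_le_L ht ht4)
      have h := upper_bound ht (lt_trans ht4 exp4_lt_one)
      have h2 := mul_le_mul_of_nonneg_right h ht.le
      exact div_le_div_of_nonneg_right h2 hL0.le
  refine hr.congr fun t => ?_
  rw [Pi.div_apply, div_div_eq_mul_div]
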